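/- Let ρ₀₀, ρ₀₁, ρ₁₀, ρ₁₁, r be real numbers such that for each j ∈ {0,1} the 2×2 matrix [[1 - ρ₁ⱼ², r - ρ₀ⱼρ₁ⱼ], [r - ρ₀ⱼρ₁ⱼ, 1 - ρ₀ⱼ²]] is positive semidefinite. Then |ρ₀₀ρ₁₀ - ρ₀₁ρ₁₁| ≤ √((1 - ρ₀₀²)(1 - ρ₁₀²)) + √((1 - ρ₀₁²)(1 - ρ₁₁²)). -/

import Mathlib

lemma aux_disc (A B p : ℝ) (q : ∀ x y : ℝ, 0 ≤ B * x ^ 2 + 2 * p * x * y + A * y ^ 2) :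
    p ^ 2 ≤ A * B := by
  have hA : 0 ≤ A := by have := q 0 1; linarith
  rcases eq_or_lt_of_le hA with h0 | hpos
  · have hB : 0 ≤ B := by have := q 1 0; linarith
    have := q p (-(B + 1))
    nlinarith [sq_nonneg p]
  · have := q A (-p)
    nlinarith

theorem stmt_1 (ρ : Fin 2 → Fin 2 → ℝ) (r : ℝ)
    (h : ∀ j : Fin 2,
      (!![1 - ρ 1 j ^ 2, r - ρ 0 j * ρ 1 j;
          r - ρ 0 j * ρ 1 j, 1 - ρ 0 j ^ 2]).PosSemidef) :
    |ρ 0 0 * ρ 1 0 - ρ 0 1 * ρ 1 1| ≤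
      Real.sqrt ((1 - ρ 0 0 ^ 2) * (1 - ρ 1 0 ^ 2)) +
        Real.sqrt ((1 - ρ 0 1 ^ 2) * (1 - ρ 1 1 ^ 2)) := by
  have key : ∀ j : Fin 2, |r - ρ 0 j * ρ 1 j| ≤
      Real.sqrt ((1 - ρ 0 j ^ 2) * (1 - ρ 1 j ^ 2)) := by
    intro j
    have hsq : (r - ρ 0 j * ρ 1 j) ^ 2 ≤ (1 - ρ 0 j ^ 2) * (1 - ρ 1 j ^ 2) := by
      apply aux_disc
      intro x y
      have := (h j).dotProduct_mulVec_nonneg ![x, y]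
      simp [dotProduct, Matrix.mulVec, Fin.sum_univ_two] at this
      nlinarith [this]
    calc |r - ρ 0 j * ρ 1 j| = Real.sqrt ((r - ρ 0 j * ρ 1 j) ^ 2) :=
          (Real.sqrt_sq_eq_abs _).symm
      _ ≤ _ := Real.sqrt_le_sqrt hsq
  have h0 := key 0
  have h1 := key 1
  calc |ρ 0 0 * ρ 1 0 - ρ 0 1 * ρ 1 1|
      = |(r - ρ 0 1 * ρ 1 1) - (r - ρ 0 0 * ρ 1 0)| := by ring_nf
    _ ≤ |r - ρ 0 1 * ρ 1 1| + |r - ρ 0 0 * ρ 1 0| := abs_sub _ _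
    _ ≤ _ := by linarith
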